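/- Let t be a real number with 2/(n+1) ≤ t < 2/n and let s ∈ ℝ. Then the homology class [y_n] ∈ H(C∞, ∂) lies in the image of the map H(C_{t,s}, ∂) → H(C∞, ∂) induced by the inclusion C_{t,s} ⊆ C∞ if and only if s ≥ (2 − t)/2. (This is the algebraic content of the second regime of Theorem C of the paper, where Υ_{T_{2,3;n,1}}(t) = t − 2 for t slightly larger than 2/(1+n).) -/

import Mathlib

/-- The labels of the `F[U,U⁻¹]`-basis `S` of `CFK^∞(T_{2,3;n,1})`. -/
inductive Gen : Type
  | x (k : ℕ) | x' (k : ℕ) | y (k : ℕ) | y' (k : ℕ) | z (k : ℕ) | w (k : ℕ)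
  deriving DecidableEq

/-- The validity predicate carving out the basis set `S` for a given `n`:
`S = {y_n, x_n, y'_1} ∪ {x'_k, y'_k : 2 ≤ k ≤ n} ∪ {x_k, z_k : 2 ≤ k ≤ n−1} ∪ {y_k, w_k : 1 ≤ k ≤ n−1}`,
where we encode `x_n` as `.x n`, `y_n` as `.y n` and `y'_1` as `.y' 1`. -/
def Gen.Valid (n : ℕ) : Gen → Prop
  | .x k => 2 ≤ k ∧ k ≤ n
  | .x' k => 2 ≤ k ∧ k ≤ n
  | .y k => 1 ≤ k ∧ k ≤ n
  | .y' k => 1 ≤ k ∧ k ≤ n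
  | .z k => 2 ≤ k ∧ k ≤ n - 1
  | .w k => 1 ≤ k ∧ k ≤ n - 1

/-- The algebraic filtration `A₁` on `S`. -/
def Gen.A1 : Gen → ℤ
  | .x _ => 1
  | .x' k => (k : ℤ)
  | .y _ => 0
  | .y' k => (k : ℤ)
  | .z _ => 1
  | .w _ => 0

/-- The Alexander filtration `A₂` on `S`. -/
def Gen.A2 : Gen → ℤ
  | .x k => (k : ℤ)
  | .x' _ => 1
  | .y k => (k : ℤ)
  | .y' _ => 0
  | .z _ => 1
  | .w _ => 0

/-- The Maslov grading `M` on `S`. -/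
def Gen.M : Gen → ℤ
  | .x _ => 1
  | .x' _ => 1
  | .y _ => 0
  | .y' _ => 0
  | .z _ => 0
  | .w _ => -1

/-- The vertical differential `∂_V` on the basis `S`:
`∂_V x_n = y'_1`, `∂_V x_k = z_k` (`2 ≤ k ≤ n−1`), `∂_V x'_k = y'_k` (`2 ≤ k ≤ n`),
`∂_V y_k = w_k` (`1 ≤ k ≤ n−1`), and `∂_V σ = 0` otherwise. -/
def Gen.dV (n : ℕ) : Gen → Option Gen
  | .x k => if k = n then some (.y' 1) else some (.z k)
  | .x' k => some (.y' k)
  | .y k => if k = n then none else some (.w k)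
  | _ => none

/-- The basis set `S`. -/
abbrev SGen (n : ℕ) := {g : Gen // g.Valid n}

/-- `C^∞` as an `F = ℤ/2`-vector space with basis `{U^m σ : m ∈ ℤ, σ ∈ S}`;
the pair `(m, σ)` encodes the basis vector `U^m σ`, whose bifiltration is
`(A₁ σ − m, A₂ σ − m)` and whose Maslov grading is `M σ − 2m`.  (The value of a
finitely supported function at `(m, σ)` is the coefficient of `U^m σ`.) -/
abbrev Cinf (n : ℕ) := (ℤ × SGen n) →₀ ZMod 2

/-- The basis vector `U^m σ` of `C^∞`. -/
noncomputable def gen (n : ℕ) (m : ℤ) (σ : SGen n) : Cinf n :=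
  Finsupp.single (m, σ) 1

set_option maxHeartbeats 1000000 in
theorem statement_9 (n : ℕ) (hn : 2 ≤ n)
    (d : Cinf n →ₗ[ZMod 2] Cinf n)
    -- (i) ∂ ∘ ∂ = 0
    (hdd : ∀ v, d (d v) = 0)
    -- F[U,U⁻¹]-linearity: ∂ commutes with multiplication by U (the shift (m,σ) ↦ (m+1,σ))
    (hU : ∀ (m : ℤ) (σ : SGen n) (m' : ℤ) (σ' : SGen n),
      d (gen n m σ) (m', σ') = d (gen n (m + 1) σ) (m' + 1, σ'))
    -- (ii) ∂ is homogeneous of Maslov degree −1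
    (hM : ∀ (m : ℤ) (σ : SGen n) (m' : ℤ) (σ' : SGen n),
      d (gen n m σ) (m', σ') ≠ 0 → σ'.1.M - 2 * m' = σ.1.M - 2 * m - 1)
    -- (iii) ∂ strictly drops the bifiltration
    (hF : ∀ (m : ℤ) (σ : SGen n) (m' : ℤ) (σ' : SGen n),
      d (gen n m σ) (m', σ') ≠ 0 →
        σ'.1.A1 - m' ≤ σ.1.A1 - m ∧ σ'.1.A2 - m' ≤ σ.1.A2 - m ∧
          ¬(σ'.1.A1 - m' = σ.1.A1 - m ∧ σ'.1.A2 - m' = σ.1.A2 - m))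
    -- (iv) the vertical components of ∂ (equal algebraic filtration) are exactly ∂_V
    (hV : ∀ (σ : SGen n) (m' : ℤ) (σ' : SGen n),
      σ'.1.A1 - m' = σ.1.A1 →
        d (gen n 0 σ) (m', σ') = if σ.1.dV n = some σ'.1 ∧ m' = 0 then 1 else 0)
    -- (v) the coefficient of y_n in ∂x_n equals 1
    (hEnd : d (gen n 0 ⟨Gen.x n, hn, le_rfl⟩) (0, ⟨Gen.y n, by omega, le_rfl⟩) = 1)
    (t s : ℝ) (ht0 : 2 / ((n : ℝ) + 1) ≤ t) (ht1 : t < 2 / (n : ℝ)) :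
    -- [y_n] is in the image of H(C_{t,s}) → H(C∞) iff s ≥ (2−t)/2
    (∃ v ∈ Submodule.span (ZMod 2)
        {u : Cinf n | ∃ (m : ℤ) (σ : SGen n), ((σ.1.A2 - m : ℤ) : ℝ) ≤ (2 / t) * s + (1 - 2 / t) * ((σ.1.A1 - m : ℤ) : ℝ) ∧ u = gen n m σ},
        d v = 0 ∧ ∃ ξ : Cinf n, gen n 0 ⟨Gen.y n, by omega, le_rfl⟩ - v = d ξ) ↔
      (2 - t) / 2 ≤ s := by

  classical
  -- basic real facts
  have hnR : (0:ℝ) < (n:ℝ) := by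
    have : 0 < n := by omega
    exact_mod_cast this
  have ht : (0:ℝ) < t := lt_of_lt_of_le (by positivity) ht0
  have hn2 : (2:ℝ) ≤ (n:ℝ) := by exact_mod_cast hn
  have htn : t * (n:ℝ) < 2 := (lt_div_iff₀ hnR).mp ht1
  have htn1 : 2 ≤ t * ((n:ℝ) + 1) := by
    have := (div_le_iff₀ (by positivity : (0:ℝ) < (n:ℝ)+1)).mp ht0
    linarith
  have hdiv : ∀ a b : ℝ, a * t ≤ 2*s + (t-2)*b → a ≤ (2/t)*s + (1-2/t)*b := by
    intro a b h
    have he : (2/t)*s + (1-2/t)*b = (2*s + (t-2)*b)/t := by field_simp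
    rw [he, le_div_iff₀ ht]; exact h
  have hdiv' : ∀ a b : ℝ, a ≤ (2/t)*s + (1-2/t)*b → a * t ≤ 2*s + (t-2)*b := by
    intro a b h
    have he : (2/t)*s + (1-2/t)*b = (2*s + (t-2)*b)/t := by field_simp
    rw [he, le_div_iff₀ ht] at h; exact h
  -- expansion of d applied to a finsupp
  have dApply : ∀ (ξ : Cinf n) (p : ℤ × SGen n),
      d ξ p = ∑ q ∈ ξ.support, ξ q * (d (gen n q.1 q.2)) p := by
    intro ξ p
    conv_lhs => rw [← Finsupp.sum_single ξ]
    rw [Finsupp.sum, map_sum, Finsupp.finset_sum_apply]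
    apply Finset.sum_congr rfl
    intro q _
    have h1 : Finsupp.single q (ξ q) = ξ q • gen n q.1 q.2 := by
      simp [gen, Finsupp.smul_single]
    rw [h1, map_smul, Finsupp.smul_apply, smul_eq_mul]
  -- which generators can hit y'_l
  have hy'mem : ∀ (l : ℕ) (hl : (Gen.y' l).Valid n) (m : ℤ) (σ : SGen n),
      d (gen n m σ) (0, ⟨Gen.y' l, hl⟩) ≠ 0 →
      m = 0 ∧ ((∃ (k : ℕ) (hk : (Gen.x' k).Valid n), l ≤ k ∧ σ = ⟨Gen.x' k, hk⟩) ∨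
        (l = 1 ∧ σ = ⟨Gen.x n, hn, le_rfl⟩)) := by
    intro l hl m σ h
    have hm := hM m σ 0 _ h
    have hf := hF m σ 0 _ h
    have hl1 : 1 ≤ l := hl.1
    obtain ⟨g, hg⟩ := σ
    cases g with
    | x k =>
      have hm' : (0:ℤ) - 2*0 = 1 - 2*m - 1 := hm
      have hm0 : m = 0 := by omega
      subst hm0
      have hf1 : (l:ℤ) - 0 ≤ 1 - 0 := hf.1
      have hle : l = 1 := by omega
      subst hle
      have hv := hV ⟨Gen.x k, hg⟩ 0 ⟨Gen.y' 1, hl⟩ (by simp [Gen.A1])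
      by_cases hk : k = n
      · subst hk; exact ⟨rfl, Or.inr ⟨rfl, rfl⟩⟩
      · rw [hv] at h
        simp [Gen.dV, hk] at h
    | x' k =>
      have hm' : (0:ℤ) - 2*0 = 1 - 2*m - 1 := hm
      have hm0 : m = 0 := by omega
      subst hm0
      have hf1 : (l:ℤ) - 0 ≤ (k:ℤ) - 0 := hf.1
      exact ⟨rfl, Or.inl ⟨k, hg, by omega, rfl⟩⟩
    | y k =>
      have hm' : (0:ℤ) - 2*0 = 0 - 2*m - 1 := hm
      omega
    | y' k =>
      have hm' : (0:ℤ) - 2*0 = 0 - 2*m - 1 := hm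
      omega
    | z k =>
      have hm' : (0:ℤ) - 2*0 = 0 - 2*m - 1 := hm
      omega
    | w k =>
      have hm' : (0:ℤ) - 2*0 = -1 - 2*m - 1 := hm
      have hm0 : m = -1 := by omega
      subst hm0
      have hf1 : (l:ℤ) - 0 ≤ 0 - (-1) := hf.1
      have hle : l = 1 := by omega
      subst hle
      rw [hU (-1) ⟨Gen.w k, hg⟩ 0 ⟨Gen.y' 1, hl⟩] at h
      norm_num at h
      have hv := hV ⟨Gen.w k, hg⟩ 1 ⟨Gen.y' 1, hl⟩ (by simp [Gen.A1])
      rw [hv] at h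
      simp [Gen.dV] at h
  -- which generators can hit y_n
  have hymem : ∀ (m : ℤ) (σ : SGen n),
      d (gen n m σ) (0, ⟨Gen.y n, by omega, le_rfl⟩) ≠ 0 →
      m = 0 ∧ σ = ⟨Gen.x n, hn, le_rfl⟩ := by
    intro m σ h
    have hm := hM m σ 0 _ h
    have hf := hF m σ 0 _ h
    obtain ⟨g, hg⟩ := σ
    cases g with
    | x k =>
      have hm' : (0:ℤ) - 2*0 = 1 - 2*m - 1 := hm
      have hm0 : m = 0 := by omega
      subst hm0
      have hf2 : (n:ℤ) - 0 ≤ (k:ℤ) - 0 := hf.2.1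
      have hg2 : k ≤ n := hg.2
      have hkn : k = n := by omega
      subst hkn
      exact ⟨rfl, rfl⟩
    | x' k =>
      have hm' : (0:ℤ) - 2*0 = 1 - 2*m - 1 := hm
      have hm0 : m = 0 := by omega
      subst hm0
      have hf2 : (n:ℤ) - 0 ≤ 1 - 0 := hf.2.1
      omega
    | y k =>
      have hm' : (0:ℤ) - 2*0 = 0 - 2*m - 1 := hm
      omega
    | y' k =>
      have hm' : (0:ℤ) - 2*0 = 0 - 2*m - 1 := hm
      omega
    | z k =>
      have hm' : (0:ℤ) - 2*0 = 0 - 2*m - 1 := hm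
      omega
    | w k =>
      have hm' : (0:ℤ) - 2*0 = -1 - 2*m - 1 := hm
      have hm0 : m = -1 := by omega
      subst hm0
      have hf2 : (n:ℤ) - 0 ≤ 0 - (-1) := hf.2.1
      omega
  -- y_n is a cycle
  have hdyn : d (gen n 0 ⟨Gen.y n, by omega, le_rfl⟩) = 0 := by
    ext p
    simp only [Finsupp.coe_zero, Pi.zero_apply]
    obtain ⟨m', σ'⟩ := p
    by_contra h
    have hm := hM 0 _ m' σ' h
    have hf := hF 0 _ m' σ' h
    obtain ⟨g, hg⟩ := σ'
    cases g with
    | x k =>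
      have hm' : (1:ℤ) - 2*m' = 0 - 2*0 - 1 := hm
      have hm0 : m' = 1 := by omega
      subst hm0
      have hv := hV ⟨Gen.y n, by omega, le_rfl⟩ 1 ⟨Gen.x k, hg⟩ (by simp [Gen.A1, Gen.A2])
      rw [hv] at h
      simp [Gen.dV] at h
    | x' k =>
      have hm' : (1:ℤ) - 2*m' = 0 - 2*0 - 1 := hm
      have hm0 : m' = 1 := by omega
      subst hm0
      have hf1 : (k:ℤ) - 1 ≤ 0 - 0 := hf.1
      have hg1 : 2 ≤ k := hg.1
      omega
    | y k =>
      have hm' : (0:ℤ) - 2*m' = 0 - 2*0 - 1 := hm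
      omega
    | y' k =>
      have hm' : (0:ℤ) - 2*m' = 0 - 2*0 - 1 := hm
      omega
    | z k =>
      have hm' : (0:ℤ) - 2*m' = 0 - 2*0 - 1 := hm
      omega
    | w k =>
      have hm' : (-1:ℤ) - 2*m' = 0 - 2*0 - 1 := hm
      have hm0 : m' = 0 := by omega
      subst hm0
      have hv := hV ⟨Gen.y n, by omega, le_rfl⟩ 0 ⟨Gen.w k, hg⟩ (by simp [Gen.A1])
      rw [hv] at h
      simp [Gen.dV] at h
  -- support of d x_n
  have hdxn : ∀ (m' : ℤ) (σ' : SGen n), d (gen n 0 ⟨Gen.x n, hn, le_rfl⟩) (m', σ') ≠ 0 →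
      m' = 0 ∧ ((∃ (k : ℕ) (hk : (Gen.y k).Valid n), k ≤ n ∧ σ' = ⟨Gen.y k, hk⟩) ∨
        σ' = ⟨Gen.y' 1, le_rfl, by omega⟩) := by
    intro m' σ' h
    have hm := hM 0 _ m' σ' h
    have hf := hF 0 _ m' σ' h
    obtain ⟨g, hg⟩ := σ'
    cases g with
    | x k =>
      have hm' : (1:ℤ) - 2*m' = 1 - 2*0 - 1 := hm
      omega
    | x' k =>
      have hm' : (1:ℤ) - 2*m' = 1 - 2*0 - 1 := hm
      omega
    | y k =>
      have hm' : (0:ℤ) - 2*m' = 1 - 2*0 - 1 := hm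
      have hm0 : m' = 0 := by omega
      subst hm0
      exact ⟨rfl, Or.inl ⟨k, hg, hg.2, rfl⟩⟩
    | y' k =>
      have hm' : (0:ℤ) - 2*m' = 1 - 2*0 - 1 := hm
      have hm0 : m' = 0 := by omega
      subst hm0
      have hf1 : (k:ℤ) - 0 ≤ 1 - 0 := hf.1
      have hk1 : k = 1 := by
        have := hg.1
        omega
      subst hk1
      exact ⟨rfl, Or.inr rfl⟩
    | z k =>
      have hm' : (0:ℤ) - 2*m' = 1 - 2*0 - 1 := hm
      have hm0 : m' = 0 := by omega
      subst hm0
      have hv := hV ⟨Gen.x n, hn, le_rfl⟩ 0 ⟨Gen.z k, hg⟩ (by simp [Gen.A1])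
      rw [hv] at h
      simp [Gen.dV] at h
    | w k =>
      have hm' : (-1:ℤ) - 2*m' = 1 - 2*0 - 1 := hm
      omega
  constructor
  · -- forward direction
    rintro ⟨v, hvspan, hdv, ξ, hξ⟩
    by_contra hs
    push_neg at hs
    -- coefficients of v vanish outside the allowed region
    have hvcoeff : ∀ p : ℤ × SGen n, v p ≠ 0 →
        ((p.2.1.A2 - p.1 : ℤ) : ℝ) ≤ (2/t)*s + (1 - 2/t)*((p.2.1.A1 - p.1 : ℤ) : ℝ) := by
      refine Submodule.span_induction
        (p := fun x _ => ∀ p : ℤ × SGen n, x p ≠ 0 →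
          ((p.2.1.A2 - p.1 : ℤ) : ℝ) ≤ (2/t)*s + (1 - 2/t)*((p.2.1.A1 - p.1 : ℤ) : ℝ))
        ?_ ?_ ?_ ?_ hvspan
      · rintro u ⟨m, σ, hP, rfl⟩ p hp
        rw [gen, Finsupp.single_apply] at hp
        split at hp
        · next heq => rw [← heq]; exact hP
        · exact absurd rfl hp
      · intro p hp; simp at hp
      · intro x y _ _ hx hy p hp
        rw [Finsupp.add_apply] at hp
        by_cases h0 : x p = 0
        · exact hy p (by rw [h0, zero_add] at hp; exact hp)
        · exact hx p h0
      · intro a x _ hx p hp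
        rw [Finsupp.smul_apply] at hp
        exact hx p (fun h => hp (by rw [h, smul_zero]))
    -- v vanishes on y_n and the y'_l
    have hvyn : v (0, ⟨Gen.y n, by omega, le_rfl⟩) = 0 := by
      by_contra h
      have h1 := hvcoeff _ h
      have h2 := hdiv' _ _ h1
      have h3 : ((((Gen.y n).A2 - 0 : ℤ)):ℝ) = (n:ℝ) := by simp [Gen.A2]
      have h4 : ((((Gen.y n).A1 - 0 : ℤ)):ℝ) = 0 := by simp [Gen.A1]
      rw [h3, h4] at h2
      nlinarith
    have hvy' : ∀ (l : ℕ) (hl : (Gen.y' l).Valid n), v (0, ⟨Gen.y' l, hl⟩) = 0 := by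
      intro l hl
      by_contra h
      have h1 := hvcoeff _ h
      have h2 := hdiv' _ _ h1
      have h3 : ((((Gen.y' l).A2 - 0 : ℤ)):ℝ) = 0 := by simp [Gen.A2]
      have h4 : ((((Gen.y' l).A1 - 0 : ℤ)):ℝ) = (l:ℝ) := by simp [Gen.A1]
      rw [h3, h4] at h2
      have hl1 : (1:ℝ) ≤ (l:ℝ) := by exact_mod_cast hl.1
      have ht2 : t < 2 := by nlinarith [mul_le_mul_of_nonneg_left hn2 ht.le]
      nlinarith
    -- pointwise version of hξ
    have hdξ : ∀ p, gen n 0 ⟨Gen.y n, by omega, le_rfl⟩ p - v p = d ξ p := by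
      intro p; rw [← Finsupp.sub_apply, hξ]
    have hdξy' : ∀ (l : ℕ) (hl : (Gen.y' l).Valid n), d ξ (0, ⟨Gen.y' l, hl⟩) = 0 := by
      intro l hl
      rw [← hdξ, hvy' l hl]
      rw [gen, Finsupp.single_apply]
      simp [Subtype.ext_iff]
    -- downward induction: the x'_l coefficients of ξ vanish
    have hstep : ∀ (l : ℕ) (hl2 : 2 ≤ l) (hln : l ≤ n),
        (∀ (k : ℕ) (hk : (Gen.x' k).Valid n), l < k → ξ (0, ⟨Gen.x' k, hk⟩) = 0) →
        ξ (0, ⟨Gen.x' l, hl2, hln⟩) = 0 := by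
      intro l hl2 hln IH
      have hl : (Gen.y' l).Valid n := ⟨by omega, hln⟩
      have h0 : d ξ (0, ⟨Gen.y' l, hl⟩) = 0 := hdξy' l hl
      rw [dApply] at h0
      rw [Finset.sum_eq_single ((0:ℤ), (⟨Gen.x' l, hl2, hln⟩ : SGen n))] at h0
      · have hval : d (gen n 0 (⟨Gen.x' l, hl2, hln⟩ : SGen n)) (0, ⟨Gen.y' l, hl⟩) = 1 := by
          rw [hV _ 0 _ (by simp [Gen.A1])]
          simp [Gen.dV]
        dsimp only at h0
        rw [hval, mul_one] at h0
        exact h0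
      · intro q hq hne
        obtain ⟨m, σ⟩ := q
        by_cases hd : d (gen n m σ) (0, ⟨Gen.y' l, hl⟩) = 0
        · rw [hd, mul_zero]
        · obtain ⟨hm0, hcase⟩ := hy'mem l hl m σ hd
          subst hm0
          rcases hcase with ⟨k, hk, hlk, rfl⟩ | ⟨hl1, _⟩
          · rcases lt_or_eq_of_le hlk with hlt | heq
            · rw [IH k hk hlt, zero_mul]
            · exact absurd (by subst heq; rfl) hne
          · omega
      · intro h
        rw [Finsupp.notMem_support_iff.mp h, zero_mul]
    have hx'zero : ∀ (j l : ℕ) (hl2 : 2 ≤ l) (hln : l ≤ n), n - l < j →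
        ξ (0, ⟨Gen.x' l, hl2, hln⟩) = 0 := by
      intro j
      induction j with
      | zero => intro l _ _ h; omega
      | succ j ih =>
        intro l hl2 hln hj
        apply hstep l hl2 hln
        intro k hk hlk
        have hk2 : k ≤ n := hk.2
        exact ih k hk.1 hk.2 (by omega)
    -- the coefficient of x_n in ξ is 0 ...
    have hl1 : (Gen.y' 1).Valid n := ⟨le_rfl, by omega⟩
    have hxn0 : ξ (0, (⟨Gen.x n, hn, le_rfl⟩ : SGen n)) = 0 := by
      have h0 : d ξ (0, ⟨Gen.y' 1, hl1⟩) = 0 := hdξy' 1 hl1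
      rw [dApply] at h0
      rw [Finset.sum_eq_single ((0:ℤ), (⟨Gen.x n, hn, le_rfl⟩ : SGen n))] at h0
      · have hval : d (gen n 0 (⟨Gen.x n, hn, le_rfl⟩ : SGen n)) (0, ⟨Gen.y' 1, hl1⟩) = 1 := by
          rw [hV _ 0 _ (by simp [Gen.A1])]
          simp [Gen.dV]
        dsimp only at h0
        rw [hval, mul_one] at h0
        exact h0
      · intro q hq hne
        obtain ⟨m, σ⟩ := q
        by_cases hd : d (gen n m σ) (0, ⟨Gen.y' 1, hl1⟩) = 0
        · rw [hd, mul_zero]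
        · obtain ⟨hm0, hcase⟩ := hy'mem 1 hl1 m σ hd
          subst hm0
          rcases hcase with ⟨k, hk, hlk, rfl⟩ | ⟨_, rfl⟩
          · have hk1 : 2 ≤ k := hk.1
            have hk2 : k ≤ n := hk.2
            rw [hx'zero (n+1) k hk1 hk2 (by omega), zero_mul]
          · exact absurd rfl hne
      · intro h
        rw [Finsupp.notMem_support_iff.mp h, zero_mul]
    -- ... but also 1, contradiction
    have hxn1 : ξ (0, (⟨Gen.x n, hn, le_rfl⟩ : SGen n)) = 1 := by
      have h0 : d ξ (0, ⟨Gen.y n, by omega, le_rfl⟩) = 1 := by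
        rw [← hdξ, hvyn]
        rw [gen, Finsupp.single_apply]
        simp
      rw [dApply] at h0
      rw [Finset.sum_eq_single ((0:ℤ), (⟨Gen.x n, hn, le_rfl⟩ : SGen n))] at h0
      · dsimp only at h0
        rw [hEnd, mul_one] at h0
        exact h0
      · intro q hq hne
        obtain ⟨m, σ⟩ := q
        by_cases hd : d (gen n m σ) (0, ⟨Gen.y n, by omega, le_rfl⟩) = 0
        · rw [hd, mul_zero]
        · obtain ⟨hm0, hσ⟩ := hymem m σ hd
          subst hm0
          subst hσ
          exact absurd rfl hne
      · intro h
        rw [Finsupp.notMem_support_iff.mp h, zero_mul]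
    rw [hxn0] at hxn1
    exact absurd hxn1.symm one_ne_zero
  · -- backward direction
    intro hs
    set v : Cinf n := gen n 0 ⟨Gen.y n, by omega, le_rfl⟩ - d (gen n 0 ⟨Gen.x n, hn, le_rfl⟩) with hvdef
    refine ⟨v, ?_, ?_, ⟨gen n 0 ⟨Gen.x n, hn, le_rfl⟩, by rw [hvdef]; abel⟩⟩
    · -- span membership
      rw [← Finsupp.sum_single v, Finsupp.sum]
      apply Submodule.sum_mem
      intro p hp
      have hgen : Finsupp.single p (v p) = v p • gen n p.1 p.2 := by
        simp [gen, Finsupp.smul_single]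
      rw [hgen]
      apply Submodule.smul_mem
      apply Submodule.subset_span
      refine ⟨p.1, p.2, ?_, rfl⟩
      -- establish the filtration inequality for each p in the support of v
      have hvp : v p ≠ 0 := Finsupp.mem_support_iff.mp hp
      obtain ⟨m', σ'⟩ := p
      have hvp' : gen n 0 (⟨Gen.y n, by omega, le_rfl⟩ : SGen n) (m', σ')
          - d (gen n 0 (⟨Gen.x n, hn, le_rfl⟩ : SGen n)) (m', σ') ≠ 0 := by
        rw [← Finsupp.sub_apply]; exact hvp
      by_cases hcase : ((m', σ') : ℤ × SGen n) = (0, ⟨Gen.y n, by omega, le_rfl⟩)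
      · exfalso
        rw [hcase] at hvp'
        have hg1 : gen n 0 (⟨Gen.y n, by omega, le_rfl⟩ : SGen n)
            ((0 : ℤ), (⟨Gen.y n, by omega, le_rfl⟩ : SGen n)) = 1 := by
          rw [gen, Finsupp.single_apply]; simp
        rw [hg1, hEnd, sub_self] at hvp'
        exact hvp' rfl
      · have hg0 : gen n 0 (⟨Gen.y n, by omega, le_rfl⟩ : SGen n) (m', σ') = 0 := by
          rw [gen, Finsupp.single_apply]
          rw [if_neg]
          intro heq
          exact hcase heq.symm
        rw [hg0, zero_sub, neg_ne_zero] at hvp'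
        obtain ⟨hm0, hcase2⟩ := hdxn m' σ' hvp'
        subst hm0
        rcases hcase2 with ⟨k, hk, hkn, rfl⟩ | rfl
        · -- y_k with k < n
          have hkn' : k ≠ n := by
            intro h; subst h
            exact hcase rfl
          apply hdiv
          have h3 : ((((Gen.y k).A2 - 0 : ℤ)):ℝ) = (k:ℝ) := by simp [Gen.A2]
          have h4 : ((((Gen.y k).A1 - 0 : ℤ)):ℝ) = 0 := by simp [Gen.A1]
          rw [h3, h4]
          have hkR : (k:ℝ) + 1 ≤ (n:ℝ) := by
            have : k + 1 ≤ n := by omega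
            exact_mod_cast this
          nlinarith [mul_le_mul_of_nonneg_left hkR ht.le]
        · -- y'_1
          apply hdiv
          have h3 : ((((Gen.y' 1).A2 - 0 : ℤ)):ℝ) = 0 := by simp [Gen.A2]
          have h4 : ((((Gen.y' 1).A1 - 0 : ℤ)):ℝ) = 1 := by simp [Gen.A1]
          rw [h3, h4]
          linarith
    · -- v is a cycle
      rw [hvdef, map_sub, hdyn, hdd, sub_zero]
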